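/- arXiv:1912.02541 — 2 statements merged into one kernel-verified Lean document; each statement's English description precedes it below -/
import Mathlib

section
/- The map (a_1,…,a_n, b_1,…,b_n) ↦ (α_1,…,α_{2n}, β_1,…,β_{n+1}) defined by β_{n+1} = max(c⁺, c⁺ − 2Σb_i, κ), β_i = 2Σ_{j=i}^n b_j + β_{n+1}, and α_{2i-1} = (−2a_i − c⁺ + β)/2, α_{2i} = (2a_i + c⁺ + β)/2 (with β = β_i if b_i ≥ 0, β = β_{i+1} otherwise), where κ = max_{1≤k≤n}[2·max(b_k,0) + |2a_k + c⁺| − 2Σ_{j=k}^n b_j], satisfies: recovering a_i = (α_{2i} − α_{2i-1} − c⁺)/2 and b_i = (β_i − β_{i+1})/2 for all i. In particular the map is injective. -/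
theorem aux_recover (n : ℕ) (cplus : ℤ) (a b : ℕ → ℤ) (βN : ℤ) (α β : ℕ → ℤ)
    (hβ : ∀ i, 1 ≤ i → i ≤ n + 1 → β i = 2 * ∑ j ∈ Finset.Icc i n, b j + βN)
    (hα : ∀ i, 1 ≤ i → i ≤ n →
      (0 ≤ b i → α (2 * i - 1) = (-(2 * a i) - cplus + β i) / 2 ∧
                 α (2 * i) = (2 * a i + cplus + β i) / 2) ∧
      (b i < 0 → α (2 * i - 1) = (-(2 * a i) - cplus + β (i + 1)) / 2 ∧
                 α (2 * i) = (2 * a i + cplus + β (i + 1)) / 2)) :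
    ∀ i, 1 ≤ i → i ≤ n →
      a i = (α (2 * i) - α (2 * i - 1) - cplus) / 2 ∧ b i = (β i - β (i + 1)) / 2 := by
  intro i h1 h2
  have hsum : ∑ j ∈ Finset.Icc i n, b j = b i + ∑ j ∈ Finset.Icc (i + 1) n, b j := by
    rw [show Finset.Icc i n = insert i (Finset.Icc (i + 1) n) by
          ext x; simp [Finset.mem_Icc]; omega,
        Finset.sum_insert (by simp)]
  have hbi := hβ i h1 (by omega)
  have hbi1 := hβ (i + 1) (by omega) (by omega)
  have hdiff : β i - β (i + 1) = 2 * b i := by rw [hbi, hbi1, hsum]; ring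
  obtain ⟨hp, hm⟩ := hα i h1 h2
  rcases le_or_gt 0 (b i) with h | h
  · obtain ⟨e1, e2⟩ := hp h
    constructor
    · omega
    · omega
  · obtain ⟨e1, e2⟩ := hm h
    constructor
    · omega
    · omega



/-- The inversion formulas for the (α, β) part of the Dynnikov coordinates on the
punctured torus recover the coordinates (a, b); in particular the map
(a, b) ↦ (α, β) is injective. -/
theorem dynnikov_alpha_beta_inversion_recovers (n : ℕ) (hn : 2 ≤ n) (cplus : ℤ)
    (hc : 0 ≤ cplus)
    (a b a' b' : ℕ → ℤ) (κ κ' βN βN' : ℤ) (α α' β β' : ℕ → ℤ)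
    (hne : (Finset.Icc 1 n).Nonempty)
    (hκ : κ = (Finset.Icc 1 n).sup' hne
      (fun k => 2 * max (b k) 0 + |2 * a k + cplus| - 2 * ∑ j ∈ Finset.Icc k n, b j))
    (hκ' : κ' = (Finset.Icc 1 n).sup' hne
      (fun k => 2 * max (b' k) 0 + |2 * a' k + cplus| - 2 * ∑ j ∈ Finset.Icc k n, b' j))
    (hβN : βN = max cplus (max (cplus - 2 * ∑ i ∈ Finset.Icc 1 n, b i) κ))
    (hβN' : βN' = max cplus (max (cplus - 2 * ∑ i ∈ Finset.Icc 1 n, b' i) κ'))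
    (hβ : ∀ i, 1 ≤ i → i ≤ n + 1 → β i = 2 * ∑ j ∈ Finset.Icc i n, b j + βN)
    (hβ' : ∀ i, 1 ≤ i → i ≤ n + 1 → β' i = 2 * ∑ j ∈ Finset.Icc i n, b' j + βN')
    (hα : ∀ i, 1 ≤ i → i ≤ n →
      (0 ≤ b i → α (2 * i - 1) = (-(2 * a i) - cplus + β i) / 2 ∧
                 α (2 * i) = (2 * a i + cplus + β i) / 2) ∧
      (b i < 0 → α (2 * i - 1) = (-(2 * a i) - cplus + β (i + 1)) / 2 ∧
                 α (2 * i) = (2 * a i + cplus + β (i + 1)) / 2))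
    (hα' : ∀ i, 1 ≤ i → i ≤ n →
      (0 ≤ b' i → α' (2 * i - 1) = (-(2 * a' i) - cplus + β' i) / 2 ∧
                  α' (2 * i) = (2 * a' i + cplus + β' i) / 2) ∧
      (b' i < 0 → α' (2 * i - 1) = (-(2 * a' i) - cplus + β' (i + 1)) / 2 ∧
                  α' (2 * i) = (2 * a' i + cplus + β' (i + 1)) / 2)) :
    (∀ i, 1 ≤ i → i ≤ n →
      a i = (α (2 * i) - α (2 * i - 1) - cplus) / 2 ∧ b i = (β i - β (i + 1)) / 2) ∧
    ((∀ i, 1 ≤ i → i ≤ 2 * n → α i = α' i) → (∀ i, 1 ≤ i → i ≤ n + 1 → β i = β' i) →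
      ∀ i, 1 ≤ i → i ≤ n → a i = a' i ∧ b i = b' i) := by
  refine ⟨aux_recover n cplus a b βN α β hβ hα, ?_⟩
  intro hαeq hβeq i h1 h2
  obtain ⟨ha1, hb1⟩ := aux_recover n cplus a b βN α β hβ hα i h1 h2
  obtain ⟨ha2, hb2⟩ := aux_recover n cplus a' b' βN' α' β' hβ' hα' i h1 h2
  have e1 : α (2 * i) = α' (2 * i) := hαeq _ (by omega) (by omega)
  have e2 : α (2 * i - 1) = α' (2 * i - 1) := hαeq _ (by omega) (by omega)
  have e3 : β i = β' i := hβeq _ h1 (by omega)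
  have e4 : β (i + 1) = β' (i + 1) := hβeq _ (by omega) (by omega)
  rw [ha1, ha2, hb1, hb2, e1, e2, e3, e4]
  exact ⟨rfl, rfl⟩
end

section
/- With β_{n+1} = max(c⁺, c⁺ − 2Σ_{i=1}^n b_i, κ) where κ = max_{1≤k≤n}[2·max(b_k,0) + |2a_k + c⁺| − 2Σ_{j=k}^n b_j], all intersection numbers β_i = 2Σ_{j=i}^n b_j + β_{n+1} are nonnegative, and moreover α_{2i-1} = (−2a_i − c⁺ + β)/2 and α_{2i} = (2a_i + c⁺ + β)/2 (β = β_i if b_i ≥ 0, else β = β_{i+1}) are nonnegative. -/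
/-- Nonnegativity of the intersection numbers produced by the inversion formulas. -/
theorem dynnikov_inversion_nonneg (n : ℕ) (hn : 2 ≤ n) (cplus : ℤ) (hc : 0 ≤ cplus)
    (a b : ℕ → ℤ) (κ βN : ℤ) (α β : ℕ → ℤ)
    (hne : (Finset.Icc 1 n).Nonempty)
    (hκ : κ = (Finset.Icc 1 n).sup' hne
      (fun k => 2 * max (b k) 0 + |2 * a k + cplus| - 2 * ∑ j ∈ Finset.Icc k n, b j))
    (hβN : βN = max cplus (max (cplus - 2 * ∑ i ∈ Finset.Icc 1 n, b i) κ))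
    (hβ : ∀ i, 1 ≤ i → i ≤ n + 1 → β i = 2 * ∑ j ∈ Finset.Icc i n, b j + βN)
    (hα : ∀ i, 1 ≤ i → i ≤ n →
      (0 ≤ b i → α (2 * i - 1) = (-(2 * a i) - cplus + β i) / 2 ∧
                 α (2 * i) = (2 * a i + cplus + β i) / 2) ∧
      (b i < 0 → α (2 * i - 1) = (-(2 * a i) - cplus + β (i + 1)) / 2 ∧
                 α (2 * i) = (2 * a i + cplus + β (i + 1)) / 2)) :
    (∀ i, 1 ≤ i → i ≤ n + 1 → 0 ≤ β i) ∧
    (∀ i, 1 ≤ i → i ≤ n → 0 ≤ α (2 * i - 1) ∧ 0 ≤ α (2 * i)) := by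
  have hκβ : κ ≤ βN := by
    rw [hβN]; exact le_max_of_le_right (le_max_right _ _)
  have hcβ : cplus ≤ βN := by rw [hβN]; exact le_max_left _ _
  have hkey : ∀ i, 1 ≤ i → i ≤ n → 2 * max (b i) 0 + |2 * a i + cplus| ≤ β i := by
    intro i h1 h2
    have hi : i ∈ Finset.Icc 1 n := Finset.mem_Icc.mpr ⟨h1, h2⟩
    have hle := Finset.le_sup'
      (fun k => 2 * max (b k) 0 + |2 * a k + cplus| - 2 * ∑ j ∈ Finset.Icc k n, b j) hi
    rw [← hκ] at hle
    rw [hβ i h1 (by omega)]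
    linarith
  have hβpos : ∀ i, 1 ≤ i → i ≤ n + 1 → 0 ≤ β i := by
    intro i h1 h2
    by_cases h : i ≤ n
    · have hk := hkey i h1 h
      have h0 : (0 : ℤ) ≤ |2 * a i + cplus| := abs_nonneg _
      have h3 : (0 : ℤ) ≤ max (b i) 0 := le_max_right _ _
      linarith
    · have hieq : i = n + 1 := by omega
      subst hieq
      rw [hβ (n + 1) h1 le_rfl, Finset.Icc_eq_empty (by omega)]
      simpa using le_trans hc hcβ
  have hstep : ∀ i, 1 ≤ i → i ≤ n → β (i + 1) = β i - 2 * b i := by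
    intro i h1 h2
    rw [hβ i h1 (by omega), hβ (i + 1) (by omega) (by omega)]
    have hsum : ∑ j ∈ Finset.Icc i n, b j = b i + ∑ j ∈ Finset.Icc (i + 1) n, b j := by
      rw [Finset.Icc_eq_cons_Ioc h2, Finset.sum_cons, Finset.Icc_add_one_left_eq_Ioc]
    rw [hsum]; ring
  refine ⟨hβpos, ?_⟩
  intro i h1 h2
  have hk := hkey i h1 h2
  have habs1 : 2 * a i + cplus ≤ |2 * a i + cplus| := le_abs_self _
  have habs2 : -(2 * a i + cplus) ≤ |2 * a i + cplus| := neg_le_abs _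
  rcases le_or_gt 0 (b i) with hb | hb
  · obtain ⟨e1, e2⟩ := (hα i h1 h2).1 hb
    rw [e1, e2]
    constructor <;> apply Int.ediv_nonneg _ (by norm_num) <;> linarith [le_max_left (b i) (0:ℤ)]
  · obtain ⟨e1, e2⟩ := (hα i h1 h2).2 hb
    rw [e1, e2]
    have hs := hstep i h1 h2
    constructor <;> apply Int.ediv_nonneg _ (by norm_num) <;> linarith [le_max_left (b i) (0:ℤ)]
end
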